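/- Let E = EuclideanSpace ℝ (Fin d), J : E → ℝ differentiable with L̂-Lipschitz gradient (L̂ ≥ 0), λ > L̂, and V(w) = sup_{θ ∈ E} [J(θ) − (λ/2)‖θ − w‖²]. Then the gradient of V is Lipschitz with constant λL̂/(λ − L̂): for all w, v ∈ E, ‖∇V(w) − ∇V(v)‖ ≤ (λL̂/(λ − L̂))‖w − v‖. In particular, if λ ≥ κL̂ for some κ > 1, then ∇V is (λ/(κ − 1))-Lipschitz. -/

import Mathlib

open RealInnerProductSpace Filter Topology Asymptotics

variable {d : ℕ}
local notation "E" => EuclideanSpace ℝ (Fin d)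

lemma aux_hasGradientAt_of_sq_bound {f : E → ℝ} {g a : E} {C : ℝ} (hC : 0 ≤ C)
    (h : ∀ u, |f u - f a - ⟪g, u - a⟫| ≤ C * ‖u - a‖ ^ 2) : HasGradientAt f g a := by
  rw [hasGradientAt_iff_hasFDerivAt, hasFDerivAt_iff_isLittleO_nhds_zero]
  rw [Asymptotics.isLittleO_iff]
  intro c hc
  have hr : (0:ℝ) < c / (C + 1) := by positivity
  filter_upwards [Metric.ball_mem_nhds (0 : E) hr] with z hz
  have hd : ‖z‖ < c / (C + 1) := by
    rw [Metric.mem_ball, dist_zero_right] at hz; exact hz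
  have h2 := h (a + z)
  rw [add_sub_cancel_left] at h2
  simp only [InnerProductSpace.toDual_apply_apply]
  rw [Real.norm_eq_abs]
  have hn : (0:ℝ) ≤ ‖z‖ := norm_nonneg _
  calc |f (a + z) - f a - ⟪g, z⟫| ≤ C * ‖z‖ ^ 2 := h2
    _ ≤ c * ‖z‖ := by
        have hC1 : (0:ℝ) < C + 1 := by linarith
        have h3 : C * (c / (C + 1)) ≤ c := by
          rw [mul_comm, div_mul_eq_mul_div, div_le_iff₀ hC1]; nlinarith
        have h4 : C * ‖z‖ ≤ c := le_trans (mul_le_mul_of_nonneg_left hd.le hC) h3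
        nlinarith [mul_le_mul_of_nonneg_right h4 hn]

lemma aux_grad_cont {J : E → ℝ} {Lhat : ℝ} (hLhat : 0 ≤ Lhat)
    (hLip : ∀ x y, ‖gradient J x - gradient J y‖ ≤ Lhat * ‖x - y‖) :
    Continuous (gradient J) := by
  have : LipschitzWith (Real.toNNReal Lhat) (gradient J) := by
    apply LipschitzWith.of_dist_le_mul
    intro x y
    rw [dist_eq_norm, dist_eq_norm]
    simpa [Real.coe_toNNReal _ hLhat] using hLip x y
  exact this.continuous

lemma aux_descent {J : E → ℝ} {Lhat : ℝ} (hLhat : 0 ≤ Lhat) (hJ : Differentiable ℝ J)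
    (hLip : ∀ x y, ‖gradient J x - gradient J y‖ ≤ Lhat * ‖x - y‖) (x y : E) :
    |J y - J x - ⟪gradient J x, y - x⟫| ≤ Lhat / 2 * ‖y - x‖ ^ 2 := by
  set z := y - x with hz
  set g' : ℝ → ℝ := fun t => ⟪gradient J (x + t • z), z⟫ with hg'
  have hline : ∀ t : ℝ, HasDerivAt (fun s : ℝ => x + s • z) z t := fun t => by
    simpa using ((hasDerivAt_id t).smul_const z).const_add x
  have hg : ∀ t : ℝ, HasDerivAt (fun s => J (x + s • z)) (g' t) t := by
    intro t
    have h1 : HasFDerivAt J (InnerProductSpace.toDual ℝ _ (gradient J (x + t • z))) (x + t • z) :=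
      (hJ _).hasGradientAt.hasFDerivAt
    have h2 := h1.comp_hasDerivAt t (hline t)
    rw [InnerProductSpace.toDual_apply_apply] at h2
    exact h2
  have hcont : Continuous g' := by
    apply Continuous.inner
    · exact (aux_grad_cont hLhat hLip).comp (by continuity)
    · exact continuous_const
  have hint : ∫ t in (0:ℝ)..1, g' t = J (x + (1:ℝ) • z) - J (x + (0:ℝ) • z) :=
    intervalIntegral.integral_eq_sub_of_hasDerivAt (fun t _ => hg t)
      (hcont.intervalIntegrable 0 1)
  have h0 : g' 0 = ⟪gradient J x, z⟫ := by simp [hg']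
  have hsplit : J y - J x - ⟪gradient J x, z⟫ = ∫ t in (0:ℝ)..1, (g' t - g' 0) := by
    rw [intervalIntegral.integral_sub (hcont.intervalIntegrable 0 1)
      (intervalIntegrable_const), hint, h0]
    have hxy : x + z = y := by rw [hz]; abel
    simp only [one_smul, zero_smul, add_zero, intervalIntegral.integral_const, smul_eq_mul,
      one_mul, sub_zero]
    rw [hxy]
  rw [hsplit]
  have hbound : ∀ t ∈ Set.uIoc (0:ℝ) 1, ‖g' t - g' 0‖ ≤ (Lhat * ‖z‖ ^ 2) * t := by
    intro t ht
    rw [Set.uIoc_of_le zero_le_one] at ht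
    have ht0 : 0 < t := ht.1
    have ht1 : t ≤ 1 := ht.2
    have : g' t - g' 0 = ⟪gradient J (x + t • z) - gradient J x, z⟫ := by
      simp [hg', inner_sub_left]
    rw [this, Real.norm_eq_abs]
    calc |⟪gradient J (x + t • z) - gradient J x, z⟫|
        ≤ ‖gradient J (x + t • z) - gradient J x‖ * ‖z‖ := abs_real_inner_le_norm _ _
      _ ≤ (Lhat * ‖(x + t • z) - x‖) * ‖z‖ := by
          gcongr; exact hLip _ _
      _ = (Lhat * ‖z‖ ^ 2) * t := by
          rw [add_sub_cancel_left, norm_smul, Real.norm_eq_abs, abs_of_pos ht0]; ring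
  rw [← Real.norm_eq_abs]
  have hval : ∫ t in (0:ℝ)..1, (Lhat * ‖z‖ ^ 2) * t = Lhat / 2 * ‖z‖ ^ 2 := by
    rw [intervalIntegral.integral_const_mul, integral_id]; norm_num; ring
  calc ‖∫ t in (0:ℝ)..1, (g' t - g' 0)‖ ≤ |∫ t in (0:ℝ)..1, (Lhat * ‖z‖ ^ 2) * t| := by
        apply intervalIntegral.norm_integral_le_abs_of_norm_le _
          ((continuous_const.mul continuous_id).intervalIntegrable 0 1)
        filter_upwards [MeasureTheory.ae_restrict_mem measurableSet_uIoc] with t ht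
        exact hbound t ht
    _ = Lhat / 2 * ‖z‖ ^ 2 := by rw [hval, abs_of_nonneg (by positivity)]

lemma aux_exists_max {J : E → ℝ} {Lhat lam : ℝ} (hLhat : 0 ≤ Lhat) (hJ : Differentiable ℝ J)
    (hLip : ∀ x y, ‖gradient J x - gradient J y‖ ≤ Lhat * ‖x - y‖) (hlam : Lhat < lam) (w : E) :
    ∃ a : E, (∀ θ : E, J θ - lam / 2 * ‖θ - w‖ ^ 2 ≤ J a - lam / 2 * ‖a - w‖ ^ 2) ∧
      gradient J a = lam • (a - w) := by
  set φ : E → ℝ := fun θ => J θ - lam / 2 * ‖θ - w‖ ^ 2 with hφ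
  have hφc : Continuous φ :=
    hJ.continuous.sub (continuous_const.mul (((continuous_id.sub continuous_const).norm).pow 2))
  have hub : ∀ θ, φ θ ≤ J w + ‖gradient J w‖ * ‖θ - w‖ - (lam - Lhat) / 2 * ‖θ - w‖ ^ 2 := by
    intro θ
    have h := abs_le.1 (aux_descent hLhat hJ hLip w θ)
    have h2 : ⟪gradient J w, θ - w⟫ ≤ ‖gradient J w‖ * ‖θ - w‖ := real_inner_le_norm _ _
    simp only [hφ]
    nlinarith [h.2]
  have hc : (0:ℝ) < (lam - Lhat) / 2 := by linarith
  have h1 : Tendsto (fun θ : E => ‖θ - w‖) (cocompact E) atTop := by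
    apply tendsto_atTop_mono (fun θ : E => norm_sub_norm_le θ w)
    exact tendsto_atTop_add_const_right _ (-‖w‖) tendsto_norm_cocompact_atTop
  have h2 : Tendsto (fun r : ℝ => J w + ‖gradient J w‖ * r - (lam - Lhat) / 2 * r ^ 2)
      atTop atBot := by
    have heq : (fun r : ℝ => J w + ‖gradient J w‖ * r - (lam - Lhat) / 2 * r ^ 2)
        = fun r : ℝ => J w + r * (‖gradient J w‖ + -((lam - Lhat) / 2 * r)) := by
      funext r; ring
    rw [heq]
    apply tendsto_atBot_add_const_left
    apply Tendsto.atTop_mul_atBot₀ tendsto_id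
    apply tendsto_atBot_add_const_left
    exact tendsto_neg_atTop_atBot.comp (Tendsto.const_mul_atTop hc tendsto_id)
  have htend : Tendsto φ (cocompact E) atBot := tendsto_atBot_mono hub (h2.comp h1)
  obtain ⟨a, ha⟩ := hφc.exists_forall_ge htend
  refine ⟨a, ha, ?_⟩
  have hnsq : HasGradientAt (fun θ : E => ‖θ - w‖ ^ 2) ((2:ℝ) • (a - w)) a := by
    apply aux_hasGradientAt_of_sq_bound (C := 1) zero_le_one
    intro u
    have hkey : ‖u - w‖ ^ 2 - ‖a - w‖ ^ 2 - ⟪(2:ℝ) • (a - w), u - a⟫ = ‖u - a‖ ^ 2 := by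
      rw [← real_inner_self_eq_norm_sq, ← real_inner_self_eq_norm_sq,
        ← real_inner_self_eq_norm_sq]
      simp only [inner_sub_left, inner_sub_right, real_inner_smul_left]
      rw [real_inner_comm w u, real_inner_comm w a, real_inner_comm a u]
      ring
    rw [hkey, abs_of_nonneg (by positivity), one_mul]
  have hφgrad : HasFDerivAt φ
      (InnerProductSpace.toDual ℝ _ (gradient J a - lam • (a - w))) a := by
    have h3 := ((hJ a).hasGradientAt.hasFDerivAt).sub (hnsq.hasFDerivAt.const_smul (lam / 2))
    have heq1 : gradient J a - lam • (a - w)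
        = gradient J a - (lam / 2) • ((2:ℝ) • (a - w)) := by
      rw [smul_smul]; norm_num
    have heq2 : (InnerProductSpace.toDual ℝ _) (gradient J a - lam • (a - w))
        = (InnerProductSpace.toDual ℝ _) (gradient J a)
          - (lam / 2) • (InnerProductSpace.toDual ℝ _) ((2:ℝ) • (a - w)) := by
      rw [heq1, map_sub, map_smul]
    rw [heq2]
    exact h3
  have hmax : IsLocalMax φ a := Filter.Eventually.of_forall ha
  have h0 := hmax.hasFDerivAt_eq_zero hφgrad
  have h4 : gradient J a - lam • (a - w) = 0 := by
    have := congrArg (fun L => (InnerProductSpace.toDual ℝ _).symm L) h0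
    simpa [gradient] using this
  rw [sub_eq_zero] at h4
  exact h4

/-- Smoothness of the Moreau-envelope value: `∇V` is `λL̂/(λ − L̂)`-Lipschitz;
in particular, if `λ ≥ κL̂` with `κ > 1`, then `∇V` is `λ/(κ − 1)`-Lipschitz. -/
theorem moreau_envelope_gradient_lipschitz
    (d : ℕ) (hd : 0 < d)
    (J : EuclideanSpace ℝ (Fin d) → ℝ) (Lhat lam : ℝ)
    (hLhat : 0 ≤ Lhat) (hJ : Differentiable ℝ J)
    (hLip : ∀ x y, ‖gradient J x - gradient J y‖ ≤ Lhat * ‖x - y‖)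
    (hlam : Lhat < lam)
    (V : EuclideanSpace ℝ (Fin d) → ℝ)
    (hV : ∀ w, V w = ⨆ θ : EuclideanSpace ℝ (Fin d), (J θ - lam / 2 * ‖θ - w‖ ^ 2)) :
    (∀ w v : EuclideanSpace ℝ (Fin d),
      ‖gradient V w - gradient V v‖ ≤ lam * Lhat / (lam - Lhat) * ‖w - v‖) ∧
    (∀ κ : ℝ, 1 < κ → κ * Lhat ≤ lam →
      ∀ w v : EuclideanSpace ℝ (Fin d),
        ‖gradient V w - gradient V v‖ ≤ lam / (κ - 1) * ‖w - v‖) := by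
  classical
  have hlam0 : 0 < lam := lt_of_le_of_lt hLhat hlam
  have hll : 0 < lam - Lhat := by linarith
  have hmax := fun w : EuclideanSpace ℝ (Fin d) => aux_exists_max hLhat hJ hLip hlam w
  choose T hTmax hTeq using hmax
  have hVval : ∀ w, V w = J (T w) - lam / 2 * ‖T w - w‖ ^ 2 := by
    intro w; rw [hV w]
    apply le_antisymm
    · exact ciSup_le (hTmax w)
    · have hbdd : BddAbove (Set.range fun θ : EuclideanSpace ℝ (Fin d) =>
          J θ - lam / 2 * ‖θ - w‖ ^ 2) := by
        refine ⟨J (T w) - lam / 2 * ‖T w - w‖ ^ 2, ?_⟩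
        rintro r ⟨θ, rfl⟩; exact hTmax w θ
      exact le_ciSup hbdd (T w)
  have hTlip : ∀ w v, ‖T w - T v‖ ≤ lam / (lam - Lhat) * ‖w - v‖ := by
    intro w v
    have key : lam • (T w - T v) = lam • (w - v) + (gradient J (T w) - gradient J (T v)) := by
      rw [hTeq w, hTeq v]; module
    have hstep : lam * ‖T w - T v‖ ≤ lam * ‖w - v‖ + Lhat * ‖T w - T v‖ := by
      calc lam * ‖T w - T v‖ = ‖lam • (T w - T v)‖ := by
            rw [norm_smul, Real.norm_eq_abs, abs_of_pos hlam0]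
        _ = ‖lam • (w - v) + (gradient J (T w) - gradient J (T v))‖ := by rw [key]
        _ ≤ ‖lam • (w - v)‖ + ‖gradient J (T w) - gradient J (T v)‖ := norm_add_le _ _
        _ ≤ lam * ‖w - v‖ + Lhat * ‖T w - T v‖ := by
            rw [norm_smul, Real.norm_eq_abs, abs_of_pos hlam0]
            exact add_le_add le_rfl (hLip _ _)
    rw [div_mul_eq_mul_div, le_div_iff₀ hll]
    nlinarith [hstep]
  set C : ℝ := lam * (lam / (lam - Lhat) + 2) with hCdef
  have hC0 : 0 ≤ C := by
    have h1 : 0 ≤ lam / (lam - Lhat) := div_nonneg hlam0.le hll.le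
    have : 0 ≤ lam / (lam - Lhat) + 2 := by linarith
    exact mul_nonneg hlam0.le this
  have hVgrad : ∀ w, HasGradientAt V (lam • (T w - w)) w := by
    intro w
    apply aux_hasGradientAt_of_sq_bound hC0
    intro u
    have hA : ‖T w - u‖ ^ 2 = ‖T w - w‖ ^ 2 - 2 * ⟪T w - w, u - w⟫ + ‖u - w‖ ^ 2 := by
      rw [show T w - u = (T w - w) - (u - w) by abel, norm_sub_sq_real]
    have hB : ‖T u - w‖ ^ 2 = ‖T u - u‖ ^ 2 + 2 * ⟪T u - u, u - w⟫ + ‖u - w‖ ^ 2 := by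
      rw [show T u - w = (T u - u) + (u - w) by abel, norm_add_sq_real]
    have hinl : ⟪lam • (T w - w), u - w⟫ = lam * ⟪T w - w, u - w⟫ := real_inner_smul_left _ _ _
    have hlow : V u - V w - ⟪lam • (T w - w), u - w⟫ ≥ -(lam / 2) * ‖u - w‖ ^ 2 := by
      have h1 : J (T w) - lam / 2 * ‖T w - u‖ ^ 2 ≤ V u := by
        rw [hVval u]; exact hTmax u (T w)
      have e1 : lam / 2 * ‖T w - u‖ ^ 2 = lam / 2 * ‖T w - w‖ ^ 2
          - lam * ⟪T w - w, u - w⟫ + lam / 2 * ‖u - w‖ ^ 2 := by rw [hA]; ring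
      rw [hVval w, hinl]
      linarith [h1, e1]
    have hup : V u - V w - ⟪lam • (T w - w), u - w⟫ ≤ C * ‖u - w‖ ^ 2 := by
      have h2 : J (T u) - lam / 2 * ‖T u - w‖ ^ 2 ≤ V w := by
        rw [hVval w]; exact hTmax w (T u)
      have h3 : V u - V w ≤ lam * ⟪T u - u, u - w⟫ + lam / 2 * ‖u - w‖ ^ 2 := by
        have e2 : lam / 2 * ‖T u - w‖ ^ 2 = lam / 2 * ‖T u - u‖ ^ 2
            + lam * ⟪T u - u, u - w⟫ + lam / 2 * ‖u - w‖ ^ 2 := by rw [hB]; ring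
        rw [hVval u]
        linarith [h2, e2]
      have h4 : ⟪T u - u, u - w⟫ - ⟪T w - w, u - w⟫
          = ⟪(T u - u) - (T w - w), u - w⟫ := by simp only [inner_sub_left]
      have h5 : ⟪(T u - u) - (T w - w), u - w⟫ ≤ ‖(T u - u) - (T w - w)‖ * ‖u - w‖ :=
        real_inner_le_norm _ _
      have h6 : ‖(T u - u) - (T w - w)‖ ≤ (lam / (lam - Lhat) + 1) * ‖u - w‖ := by
        calc ‖(T u - u) - (T w - w)‖ = ‖(T u - T w) - (u - w)‖ := by
              rw [show (T u - u) - (T w - w) = (T u - T w) - (u - w) by abel]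
          _ ≤ ‖T u - T w‖ + ‖u - w‖ := norm_sub_le _ _
          _ ≤ lam / (lam - Lhat) * ‖u - w‖ + ‖u - w‖ := by
              exact add_le_add (hTlip u w) le_rfl
          _ = (lam / (lam - Lhat) + 1) * ‖u - w‖ := by ring
      have h7 : ⟪(T u - u) - (T w - w), u - w⟫ ≤ (lam / (lam - Lhat) + 1) * ‖u - w‖ ^ 2 := by
        calc ⟪(T u - u) - (T w - w), u - w⟫ ≤ ‖(T u - u) - (T w - w)‖ * ‖u - w‖ := h5
          _ ≤ ((lam / (lam - Lhat) + 1) * ‖u - w‖) * ‖u - w‖ := by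
              exact mul_le_mul_of_nonneg_right h6 (norm_nonneg _)
          _ = (lam / (lam - Lhat) + 1) * ‖u - w‖ ^ 2 := by ring
      have h8 : lam * ⟪(T u - u) - (T w - w), u - w⟫
          ≤ lam * ((lam / (lam - Lhat) + 1) * ‖u - w‖ ^ 2) :=
        mul_le_mul_of_nonneg_left h7 hlam0.le
      have h4' : lam * ⟪T u - u, u - w⟫ - lam * ⟪T w - w, u - w⟫
          = lam * ⟪(T u - u) - (T w - w), u - w⟫ := by simp only [inner_sub_left]; ring
      have h9 : 0 ≤ lam * ‖u - w‖ ^ 2 := mul_nonneg hlam0.le (sq_nonneg _)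
      have hCexp : C * ‖u - w‖ ^ 2
          = lam * ((lam / (lam - Lhat) + 1) * ‖u - w‖ ^ 2) + lam * ‖u - w‖ ^ 2 := by
        rw [hCdef]; ring
      rw [hinl]
      linarith [h3, h4', h8, h9, hCexp]
    rw [abs_le]
    constructor
    · have hq : 0 ≤ lam / (lam - Lhat) := div_nonneg hlam0.le hll.le
      have hCl : lam / 2 ≤ C := by rw [hCdef]; nlinarith
      have : lam / 2 * ‖u - w‖ ^ 2 ≤ C * ‖u - w‖ ^ 2 :=
        mul_le_mul_of_nonneg_right hCl (sq_nonneg _)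
      linarith [hlow]
    · exact hup
  have hgV : ∀ w, gradient V w = lam • (T w - w) := fun w => (hVgrad w).gradient
  have part1 : ∀ w v : EuclideanSpace ℝ (Fin d),
      ‖gradient V w - gradient V v‖ ≤ lam * Lhat / (lam - Lhat) * ‖w - v‖ := by
    intro w v
    rw [hgV w, hgV v, ← hTeq w, ← hTeq v]
    calc ‖gradient J (T w) - gradient J (T v)‖ ≤ Lhat * ‖T w - T v‖ := hLip _ _
      _ ≤ Lhat * (lam / (lam - Lhat) * ‖w - v‖) :=
          mul_le_mul_of_nonneg_left (hTlip w v) hLhat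
      _ = lam * Lhat / (lam - Lhat) * ‖w - v‖ := by ring
  refine ⟨part1, ?_⟩
  intro κ hκ hκlam w v
  have hbd : lam * Lhat / (lam - Lhat) ≤ lam / (κ - 1) := by
    rw [div_le_div_iff₀ hll (by linarith : (0:ℝ) < κ - 1)]
    nlinarith
  exact le_trans (part1 w v) (mul_le_mul_of_nonneg_right hbd (norm_nonneg _))
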